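/- If G is a graph on n vertices, then i(G) · k(G) ≤ (n+1) · 2^n, with equality when G is the complete graph K_n. -/

import Mathlib

open SimpleGraph Finset
open scoped symmDiff Classical

/-- Number of cliques (complete vertex subsets, including the empty set) of `G`. -/
noncomputable def cliqueCount {V : Type*} (G : SimpleGraph V) : ℕ :=
  Nat.card {s : Finset V // G.IsClique (s : Set V)}

/-- Number of independent sets of `G` (cliques of the complement). -/
noncomputable def indepCount {V : Type*} (G : SimpleGraph V) : ℕ :=
  cliqueCount Gᶜ

private lemma cliqueCount_eq_of {V : Type*} [Fintype V] (G : SimpleGraph V)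
    (I : Finset (Finset V)) (hI : ∀ s : Finset V, s ∈ I ↔ G.IsClique (s : Set V)) :
    cliqueCount G = I.card := by
  classical
  rw [cliqueCount, Nat.card_eq_fintype_card, Fintype.card_subtype]
  congr 1
  ext s
  simp [hI]

/-- The number of partitions of `S` into an independent set and a clique is at most `|S| + 1`. -/
private lemma partition_card_le {V : Type*} [DecidableEq V] (G : SimpleGraph V) (S : Finset V) :
    (S.powerset.filter fun A : Finset V =>
        Gᶜ.IsClique (A : Set V) ∧ G.IsClique ((S \ A : Finset V) : Set V)).card ≤ S.card + 1 := by
  classical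
  induction S using Finset.induction_on with
  | empty =>
    calc (Finset.filter _ _).card ≤ (∅ : Finset V).powerset.card := card_filter_le _ _
    _ ≤ 1 := by simp
  | @insert a S ha ih =>
    set T : Finset (Finset V) := (insert a S).powerset.filter (fun A : Finset V =>
        Gᶜ.IsClique (A : Set V) ∧ G.IsClique (((insert a S) \ A : Finset V) : Set V)) with hT
    set T' : Finset (Finset V) := S.powerset.filter (fun A : Finset V =>
        Gᶜ.IsClique (A : Set V) ∧ G.IsClique ((S \ A : Finset V) : Set V)) with hT'
    have key0 : T.filter (fun A => a ∉ A) ⊆ T' := by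
      intro A hA
      simp only [hT, hT', mem_filter, mem_powerset] at hA ⊢
      obtain ⟨⟨hsub, hind, hcl⟩, hnot⟩ := hA
      have hAS : A ⊆ S := fun x hx => by
        rcases mem_insert.mp (hsub hx) with h | h
        · exact absurd (h ▸ hx) hnot
        · exact h
      refine ⟨hAS, hind, hcl.subset ?_⟩
      intro x hx
      simp only [coe_sdiff, Set.mem_diff, mem_coe, mem_sdiff] at hx ⊢
      exact ⟨mem_insert_of_mem hx.1, hx.2⟩
    have key1 : (T.filter (fun A => a ∈ A)).image (fun A => A.erase a) ⊆ T' := by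
      intro C hC
      obtain ⟨A, hA, rfl⟩ := mem_image.mp hC
      simp only [hT, hT', mem_filter, mem_powerset] at hA ⊢
      obtain ⟨⟨hsub, hind, hcl⟩, hmem⟩ := hA
      refine ⟨?_, hind.subset (by simp [Finset.erase_subset]), hcl.subset ?_⟩
      · intro x hx
        have hxa : x ≠ a := ne_of_mem_erase hx
        rcases mem_insert.mp (hsub (mem_of_mem_erase hx)) with h | h
        · exact absurd h hxa
        · exact h
      · intro x hx
        simp only [coe_sdiff, Set.mem_diff, mem_coe, mem_erase] at hx ⊢
        have hxS : x ∈ S := hx.1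
        have hxa : x ≠ a := by rintro rfl; exact ha hxS
        exact ⟨mem_insert_of_mem hxS, fun hxA => hx.2 ⟨hxa, hxA⟩⟩
    have inj1 : ((T.filter (fun A => a ∈ A)).image (fun A => A.erase a)).card
        = (T.filter (fun A => a ∈ A)).card := by
      apply card_image_of_injOn
      intro A hA B hB hAB
      simp only [mem_coe, mem_filter] at hA hB
      have hAB' : A.erase a = B.erase a := hAB
      have h : insert a (A.erase a) = insert a (B.erase a) := by rw [hAB']
      rwa [insert_erase hA.2, insert_erase hB.2] at h
    have inter_sub : (T.filter (fun A => a ∉ A)) ∩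
        ((T.filter (fun A => a ∈ A)).image (fun A => A.erase a))
        ⊆ {S.filter fun x => ¬ G.Adj a x} := by
      intro C hC
      rw [mem_inter] at hC
      obtain ⟨hC0, hC1⟩ := hC
      simp only [mem_filter] at hC0
      obtain ⟨hCT, hCa⟩ := hC0
      obtain ⟨A, hA, rfl⟩ := mem_image.mp hC1
      simp only [mem_filter] at hA
      obtain ⟨hAT, haA⟩ := hA
      simp only [hT, mem_filter, mem_powerset] at hAT hCT
      obtain ⟨hAsub, hAind, _⟩ := hAT
      obtain ⟨hCsub, _, hCcl⟩ := hCT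
      have hCS : A.erase a ⊆ S := fun x hx => by
        rcases mem_insert.mp (hCsub hx) with h | h
        · exact absurd (h ▸ hx) hCa
        · exact h
      rw [mem_singleton]
      ext x
      simp only [mem_filter]
      constructor
      · intro hx
        refine ⟨hCS hx, fun hadj => ?_⟩
        have hxa : x ≠ a := ne_of_mem_erase hx
        have hadj' : Gᶜ.Adj a x := hAind (Finset.mem_coe.mpr haA)
          (Finset.mem_coe.mpr (mem_of_mem_erase hx)) (Ne.symm hxa)
        exact ((G.compl_adj a x).mp hadj').2 hadj
      · rintro ⟨hxS, hnadj⟩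
        by_contra hxC
        have hxa : x ≠ a := by rintro rfl; exact ha hxS
        have hx1 : x ∈ ((insert a S) \ A.erase a : Finset V) :=
          mem_sdiff.mpr ⟨mem_insert_of_mem hxS, hxC⟩
        have hx2 : a ∈ ((insert a S) \ A.erase a : Finset V) :=
          mem_sdiff.mpr ⟨mem_insert_self a S, hCa⟩
        exact hnadj (hCcl (Finset.mem_coe.mpr hx2) (Finset.mem_coe.mpr hx1) (Ne.symm hxa))
    have hsplit : (T.filter (fun A => a ∈ A)).card + (T.filter (fun A => a ∉ A)).card
        = T.card := card_filter_add_card_filter_not _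
    have hunion : (T.filter (fun A => a ∉ A)) ∪
        ((T.filter (fun A => a ∈ A)).image (fun A => A.erase a)) ⊆ T' :=
      union_subset key0 key1
    have hcards := card_union_add_card_inter (T.filter (fun A => a ∉ A))
        ((T.filter (fun A => a ∈ A)).image (fun A => A.erase a))
    have h1 : ((T.filter (fun A => a ∉ A)) ∪
        ((T.filter (fun A => a ∈ A)).image (fun A => A.erase a))).card ≤ T'.card :=
      card_le_card hunion
    have h2 : ((T.filter (fun A => a ∉ A)) ∩
        ((T.filter (fun A => a ∈ A)).image (fun A => A.erase a))).card ≤ 1 := by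
      calc _ ≤ ({S.filter fun x => ¬ G.Adj a x} : Finset (Finset V)).card :=
            card_le_card inter_sub
      _ = 1 := card_singleton _
    have : T.card ≤ T'.card + 1 := by omega
    calc T.card ≤ T'.card + 1 := this
    _ ≤ (S.card + 1) + 1 := by exact Nat.add_le_add_right ih 1
    _ = (insert a S).card + 1 := by rw [card_insert_of_notMem ha]

/-- Characterization of the independent part when the intersection is `{t}`. -/
private lemma indep_part_eq {V : Type*} [DecidableEq V] (G : SimpleGraph V)
    {A B : Finset V} {t : V} (hA : Gᶜ.IsClique (A : Set V)) (hB : G.IsClique (B : Set V))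
    (hAB : A ∩ B = {t}) :
    A = insert t ((A ∆ B).filter fun x => ¬ G.Adj t x) := by
  have htA : t ∈ A := (mem_inter.mp (hAB ▸ mem_singleton_self t)).1
  have htB : t ∈ B := (mem_inter.mp (hAB ▸ mem_singleton_self t)).2
  ext x
  simp only [mem_insert, mem_filter, Finset.mem_symmDiff]
  constructor
  · intro hx
    by_cases hxt : x = t
    · exact Or.inl hxt
    · have hxB : x ∉ B := fun hxB => hxt (by
        have : x ∈ A ∩ B := mem_inter.mpr ⟨hx, hxB⟩
        simpa [hAB] using this)
      refine Or.inr ⟨Or.inl ⟨hx, hxB⟩, fun hadj => ?_⟩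
      have : Gᶜ.Adj t x := hA (Finset.mem_coe.mpr htA) (Finset.mem_coe.mpr hx) (Ne.symm hxt)
      exact ((G.compl_adj t x).mp this).2 hadj
  · rintro (rfl | ⟨hS, hnadj⟩)
    · exact htA
    · rcases hS with ⟨hxA, _⟩ | ⟨hxB, hxA⟩
      · exact hxA
      · exfalso
        have hxt : x ≠ t := by
          rintro rfl
          exact hxA htA
        exact hnadj (hB (Finset.mem_coe.mpr htB) (Finset.mem_coe.mpr hxB) (Ne.symm hxt))

private lemma inter_subsingleton {V : Type*} [DecidableEq V] (G : SimpleGraph V)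
    {A B : Finset V} (hA : Gᶜ.IsClique (A : Set V)) (hB : G.IsClique (B : Set V)) :
    (A ∩ B).card ≤ 1 := by
  rw [Finset.card_le_one]
  intro x hx y hy
  by_contra hxy
  have hx' := mem_inter.mp hx
  have hy' := mem_inter.mp hy
  have h1 : Gᶜ.Adj x y := hA (Finset.mem_coe.mpr hx'.1) (Finset.mem_coe.mpr hy'.1) hxy
  have h2 : G.Adj x y := hB (Finset.mem_coe.mpr hx'.2) (Finset.mem_coe.mpr hy'.2) hxy
  exact ((G.compl_adj x y).mp h1).2 h2

/-- Each fiber of the symmetric-difference map has at most `n + 1` elements. -/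
private lemma fiber_card_le {V : Type*} [Fintype V] [DecidableEq V] (G : SimpleGraph V)
    (I K : Finset (Finset V)) (hI : ∀ s : Finset V, s ∈ I ↔ Gᶜ.IsClique (s : Set V))
    (hK : ∀ s : Finset V, s ∈ K ↔ G.IsClique (s : Set V)) (S : Finset V) :
    ((I ×ˢ K).filter (fun p => p.1 ∆ p.2 = S)).card ≤ Fintype.card V + 1 := by
  classical
  set F : Finset (Finset V × Finset V) := (I ×ˢ K).filter (fun p => p.1 ∆ p.2 = S) with hF
  have hmem : ∀ p ∈ F, Gᶜ.IsClique (p.1 : Set V) ∧ G.IsClique (p.2 : Set V) ∧ p.1 ∆ p.2 = S := by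
    intro p hp
    simp only [hF, mem_filter, mem_product] at hp
    exact ⟨(hI _).mp hp.1.1, (hK _).mp hp.1.2, hp.2⟩
  have hsnd : ∀ p ∈ F, p.2 = p.1 ∆ S := by
    intro p hp
    rw [← (hmem p hp).2.2, symmDiff_symmDiff_cancel_left]
  -- pairs with empty intersection
  have h0 : (F.filter fun p => p.1 ∩ p.2 = ∅).card ≤ S.card + 1 := by
    have := partition_card_le G S
    refine le_trans (card_le_card_of_injOn (fun p => p.1) ?_ ?_) this
    · intro p hp
      rw [mem_coe, mem_filter] at hp
      obtain ⟨hpF, hpi⟩ := hp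
      obtain ⟨hA, hB, hABS⟩ := hmem p hpF
      have hsub : p.1 ⊆ S := by
        intro x hx
        rw [← hABS, Finset.mem_symmDiff]
        left
        refine ⟨hx, fun hx2 => ?_⟩
        have : x ∈ p.1 ∩ p.2 := mem_inter.mpr ⟨hx, hx2⟩
        simp [hpi] at this
      have hdiff : S \ p.1 = p.2 := by
        ext x
        rw [mem_sdiff, ← hABS, Finset.mem_symmDiff]
        constructor
        · rintro ⟨⟨hx1, _⟩ | ⟨hx2, _⟩, hnx⟩
          · exact absurd hx1 hnx
          · exact hx2
        · intro hx2
          have hx1 : x ∉ p.1 := fun hx1 => by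
            have : x ∈ p.1 ∩ p.2 := mem_inter.mpr ⟨hx1, hx2⟩
            simp [hpi] at this
          exact ⟨Or.inr ⟨hx2, hx1⟩, hx1⟩
      rw [mem_coe, mem_filter, mem_powerset]
      exact ⟨hsub, hA, hdiff ▸ hB⟩
    · intro p hp q hq hpq
      rw [mem_coe, mem_filter] at hp hq
      have hpq' : p.1 = q.1 := hpq
      ext1
      · exact hpq'
      · rw [hsnd p hp.1, hsnd q hq.1, hpq']
  -- pairs with nonempty intersection
  have h1 : (F.filter fun p => ¬ p.1 ∩ p.2 = ∅).card ≤ ((univ \ S : Finset V).image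
      (fun t => ({t} : Finset V))).card := by
    apply card_le_card_of_injOn (fun p => p.1 ∩ p.2)
    · intro p hp
      rw [mem_coe, mem_filter] at hp
      obtain ⟨hpF, hpne⟩ := hp
      obtain ⟨hA, hB, hABS⟩ := hmem p hpF
      have hle := inter_subsingleton G hA hB
      have hpos : 0 < (p.1 ∩ p.2).card := card_pos.mpr (nonempty_iff_ne_empty.mpr hpne)
      have hone : (p.1 ∩ p.2).card = 1 := le_antisymm hle hpos
      obtain ⟨t, ht⟩ := card_eq_one.mp hone
      rw [mem_coe]
      beta_reduce
      rw [ht]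
      apply mem_image_of_mem
      rw [mem_sdiff]
      refine ⟨mem_univ t, fun htS => ?_⟩
      have ht' : t ∈ p.1 ∩ p.2 := ht ▸ mem_singleton_self t
      rw [mem_inter] at ht'
      rw [← hABS, Finset.mem_symmDiff] at htS
      rcases htS with ⟨_, h⟩ | ⟨_, h⟩
      · exact h ht'.2
      · exact h ht'.1
    · intro p hp q hq hpq
      have hpq' : p.1 ∩ p.2 = q.1 ∩ q.2 := hpq
      simp only [mem_coe, mem_filter] at hp hq
      obtain ⟨hpF, hpne⟩ := hp
      obtain ⟨hqF, hqne⟩ := hq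
      obtain ⟨hAp, hBp, hSp⟩ := hmem p hpF
      obtain ⟨hAq, hBq, hSq⟩ := hmem q hqF
      have honep : (p.1 ∩ p.2).card = 1 :=
        le_antisymm (inter_subsingleton G hAp hBp)
          (card_pos.mpr (nonempty_iff_ne_empty.mpr hpne))
      obtain ⟨t, ht⟩ := card_eq_one.mp honep
      have htq : q.1 ∩ q.2 = {t} := by rw [← hpq', ht]
      have e1 : p.1 = q.1 := by
        rw [indep_part_eq G hAp hBp ht, indep_part_eq G hAq hBq htq, hSp, hSq]
      ext1
      · exact e1
      · rw [hsnd p hpF, hsnd q hqF, e1]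
  have himg : ((univ \ S : Finset V).image (fun t => ({t} : Finset V))).card
      = (univ \ S : Finset V).card :=
    card_image_of_injective _ Finset.singleton_injective
  have hsd : (univ \ S : Finset V).card = Fintype.card V - S.card := by
    rw [card_sdiff_of_subset (subset_univ S), card_univ]
  have hS : S.card ≤ Fintype.card V := by
    rw [← card_univ]; exact card_le_card (subset_univ S)
  have hsplit : (F.filter fun p => p.1 ∩ p.2 = ∅).card +
      (F.filter fun p => ¬ p.1 ∩ p.2 = ∅).card = F.card :=
    card_filter_add_card_filter_not _
  omega

private lemma prod_card_le {V : Type*} [Fintype V] (G : SimpleGraph V) (n : ℕ)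
    (hn : Fintype.card V = n) (I K : Finset (Finset V))
    (hI : ∀ s : Finset V, s ∈ I ↔ Gᶜ.IsClique (s : Set V))
    (hK : ∀ s : Finset V, s ∈ K ↔ G.IsClique (s : Set V)) :
    I.card * K.card ≤ (n + 1) * 2 ^ n := by
  classical
  rw [← card_product]
  rw [Finset.card_eq_sum_card_fiberwise (f := fun p : Finset V × Finset V => p.1 ∆ p.2)
      (t := (univ : Finset V).powerset) (fun p _ => mem_powerset.mpr (subset_univ _))]
  calc _ ≤ ((univ : Finset V).powerset.card) • (Fintype.card V + 1) :=
        Finset.sum_le_card_nsmul _ _ _ (fun S _ => fiber_card_le G I K hI hK S)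
  _ = 2 ^ n * (n + 1) := by rw [card_powerset, card_univ, hn, smul_eq_mul]
  _ = (n + 1) * 2 ^ n := mul_comm _ _

theorem pi_le_and_eq_top {V : Type*} [Fintype V] (G : SimpleGraph V) (n : ℕ)
    (hn : Fintype.card V = n) :
    indepCount G * cliqueCount G ≤ (n + 1) * 2 ^ n ∧
      indepCount (⊤ : SimpleGraph V) * cliqueCount (⊤ : SimpleGraph V) = (n + 1) * 2 ^ n := by
  classical
  constructor
  · -- the inequality
    set I : Finset (Finset V) := univ.filter fun s : Finset V => Gᶜ.IsClique (s : Set V) with hIdef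
    set K : Finset (Finset V) := univ.filter fun s : Finset V => G.IsClique (s : Set V) with hKdef
    have hI : ∀ s : Finset V, s ∈ I ↔ Gᶜ.IsClique (s : Set V) := by intro s; simp [hIdef]
    have hK : ∀ s : Finset V, s ∈ K ↔ G.IsClique (s : Set V) := by intro s; simp [hKdef]
    rw [indepCount, cliqueCount_eq_of Gᶜ I hI, cliqueCount_eq_of G K hK]
    exact prod_card_le G n hn I K hI hK
  · -- equality for the complete graph
    have hcompl : (⊤ : SimpleGraph V)ᶜ = (⊥ : SimpleGraph V) := by
      ext x y
      simp [compl_adj]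
    have hk : cliqueCount (⊤ : SimpleGraph V) = 2 ^ n := by
      have hall : ∀ s : Finset V, (⊤ : SimpleGraph V).IsClique (s : Set V) := by
        intro s x _ y _ hxy
        simp [hxy]
      rw [cliqueCount_eq_of (⊤ : SimpleGraph V) univ (fun s => by simp [hall s]), card_univ,
        Fintype.card_finset, hn]
    have hi : indepCount (⊤ : SimpleGraph V) = n + 1 := by
      rw [indepCount, hcompl]
      have hiff : ∀ s : Finset V, (⊥ : SimpleGraph V).IsClique (s : Set V) ↔ s.card ≤ 1 := by
        intro s
        rw [isClique_bot_iff, Finset.card_le_one]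
        constructor
        · intro h x hx y hy
          by_contra hxy
          exact hxy (h (Finset.mem_coe.mpr hx) (Finset.mem_coe.mpr hy))
        · intro h x hx y hy
          exact h x (Finset.mem_coe.mpr hx) y (Finset.mem_coe.mpr hy)
      rw [cliqueCount_eq_of (⊥ : SimpleGraph V)
          (insert (∅ : Finset V) (univ.image fun t : V => ({t} : Finset V))) ?_]
      · rw [card_insert_of_notMem, card_image_of_injective _ Finset.singleton_injective,
          card_univ, hn, add_comm]
        simp only [mem_image]
        rintro ⟨t, -, h⟩
        exact (singleton_ne_empty t) h
      · intro s
        simp only [mem_insert, mem_image, hiff s]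
        rw [Nat.le_one_iff_eq_zero_or_eq_one, card_eq_zero, card_eq_one]
        constructor
        · rintro (rfl | ⟨t, _, rfl⟩)
          · exact Or.inl rfl
          · exact Or.inr ⟨t, rfl⟩
        · rintro (rfl | ⟨t, rfl⟩)
          · exact Or.inl rfl
          · exact Or.inr ⟨t, mem_univ t, rfl⟩
    rw [hi, hk]
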